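/- Let λ₁,…,λ_d be complex numbers partitioned as in Lemma 1 (s of modulus > 1, 2t of modulus 1, the rest of modulus < 1, no root of unity among them) with Λ = ∏_{i=1}^s λᵢ and F(n) = ∏_{i=1}^d |λᵢⁿ - 1|. Then | F(n)·|Λ|^{-n} - ∏_{i=s+1}^{s+2t} |λᵢⁿ - 1| | = O(κ^{-n}) for κ = min(|λ_s|, |λ_{s+2t+1}|^{-1}) > 1. -/

import Mathlib

open Finset

lemma prod_sub_one_bound (S : Finset ℕ) (r : ℕ → ℝ) (ε : ℝ) (hε : 0 ≤ ε) (hε1 : ε ≤ 1)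
    (h : ∀ i ∈ S, |r i - 1| ≤ ε) :
    |(∏ i ∈ S, r i) - 1| ≤ S.card * 2 ^ S.card * ε := by
  induction S using Finset.induction with
  | empty => simp [hε]
  | @insert a S ha ih =>
    have hP := ih (fun i hi => h i (Finset.mem_insert_of_mem hi))
    have hra := h a (Finset.mem_insert_self a S)
    rw [Finset.prod_insert ha, Finset.card_insert_of_notMem ha]
    have key : r a * (∏ i ∈ S, r i) - 1 = r a * ((∏ i ∈ S, r i) - 1) + (r a - 1) := by ring
    rw [key]
    have h1 : |r a * ((∏ i ∈ S, r i) - 1) + (r a - 1)|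
        ≤ |r a| * |(∏ i ∈ S, r i) - 1| + |r a - 1| := by
      calc _ ≤ |r a * ((∏ i ∈ S, r i) - 1)| + |r a - 1| := abs_add_le _ _
        _ = |r a| * |(∏ i ∈ S, r i) - 1| + |r a - 1| := by rw [abs_mul]
    have hra' : |r a| ≤ 1 + ε := by
      have := abs_sub_abs_le_abs_sub (r a) 1
      simp only [abs_one] at this
      linarith [hra, this]
    have h2 : (1:ℝ) ≤ 2 ^ S.card := one_le_pow₀ (by norm_num)
    have habs : (0:ℝ) ≤ |(∏ i ∈ S, r i) - 1| := abs_nonneg _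
    have habs2 : (0:ℝ) ≤ |r a| := abs_nonneg _
    push_cast
    calc |r a * ((∏ i ∈ S, r i) - 1) + (r a - 1)|
        ≤ |r a| * |(∏ i ∈ S, r i) - 1| + |r a - 1| := h1
      _ ≤ (1 + ε) * (S.card * 2 ^ S.card * ε) + ε := by
          have := mul_le_mul hra' hP habs (by linarith)
          linarith
      _ ≤ (S.card + 1) * 2 ^ (S.card + 1) * ε := by
          have hc : (0:ℝ) ≤ (S.card : ℝ) := Nat.cast_nonneg _
          rw [pow_succ]
          have hx0 : (0:ℝ) ≤ 2 ^ S.card := by positivity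
          have e1 : 0 ≤ ((S.card : ℝ) * 2 ^ S.card) * (ε - ε * ε) :=
            mul_nonneg (mul_nonneg hc hx0) (by nlinarith)
          have e2 : (0:ℝ) ≤ (2 * 2 ^ S.card - 1) * ε :=
            mul_nonneg (by linarith) hε
          nlinarith [e1, e2]

theorem stmt_8 (d s t : ℕ) (hst : s + 2 * t ≤ d) (lam : ℕ → ℂ)
    (h1 : ∀ i, i < s → 1 < ‖lam i‖)
    (h2 : ∀ i, s ≤ i → i < s + 2 * t → ‖lam i‖ = 1)
    (h3 : ∀ i, s + 2 * t ≤ i → i < d → ‖lam i‖ < 1)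
    (hru : ∀ i, i < d → ∀ k : ℕ, 1 ≤ k → lam i ^ k ≠ 1)
    (κ : ℝ) (hκ : 1 < κ)
    (hκ1 : ∀ i, i < s → κ ≤ ‖lam i‖)
    (hκ2 : ∀ i, s + 2 * t ≤ i → i < d → ‖lam i‖ ≤ κ⁻¹) :
    ∃ C : ℝ, ∀ n : ℕ, 1 ≤ n →
      |(∏ i ∈ Finset.range d, ‖lam i ^ n - 1‖) *
          (‖∏ i ∈ Finset.range s, lam i‖ ^ n)⁻¹ -
        ∏ i ∈ Finset.Ico s (s + 2 * t), ‖lam i ^ n - 1‖|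
      ≤ C * κ ^ (-(n : ℝ)) := by
  have hκ0 : (0:ℝ) < κ := by linarith
  refine ⟨2 ^ (2 * t) * (d * 2 ^ d), fun n hn => ?_⟩
  set ε : ℝ := (κ⁻¹) ^ n with hεdef
  have hκn : κ ^ (-(n : ℝ)) = ε := by
    rw [Real.rpow_neg hκ0.le, Real.rpow_natCast, hεdef, inv_pow]
  have hε0 : 0 ≤ ε := by positivity
  have hε1 : ε ≤ 1 := by
    apply pow_le_one₀ (by positivity)
    exact inv_le_one_of_one_le₀ hκ.le
  set r : ℕ → ℝ := fun i =>
    if i < s then ‖lam i ^ n - 1‖ / ‖lam i‖ ^ n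
    else ‖lam i ^ n - 1‖ with hrdef
  set S : Finset ℕ := Finset.range s ∪ Finset.Ico (s + 2 * t) d with hSdef
  have hdisj : Disjoint (Finset.range s) (Finset.Ico (s + 2 * t) d) := by
    rw [Finset.disjoint_left]
    intro i hi hi'
    simp only [Finset.mem_range] at hi
    simp only [Finset.mem_Ico] at hi'
    omega
  -- factor bounds
  have hr : ∀ i ∈ S, |r i - 1| ≤ ε := by
    intro i hi
    rw [hSdef, Finset.mem_union] at hi
    rcases hi with hi | hi
    · rw [Finset.mem_range] at hi
      have hli : 1 < ‖lam i‖ := h1 i hi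
      have hb : (0:ℝ) < ‖lam i‖ ^ n := by positivity
      have hrs : r i = ‖lam i ^ n - 1‖ / ‖lam i‖ ^ n := by
        simp [hrdef, hi]
      rw [hrs]
      have key : ‖lam i ^ n - 1‖ / ‖lam i‖ ^ n - 1
          = (‖lam i ^ n - 1‖ - ‖lam i‖ ^ n) / ‖lam i‖ ^ n := by
        field_simp
      rw [key, abs_div, abs_of_pos hb]
      have hnum : |‖lam i ^ n - 1‖ - ‖lam i‖ ^ n| ≤ 1 := by
        have := abs_norm_sub_norm_le (lam i ^ n - 1) (lam i ^ n)
        simp only [sub_sub_cancel_left, norm_neg, norm_one] at this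
        calc |‖lam i ^ n - 1‖ - ‖lam i‖ ^ n|
            = |‖lam i ^ n - 1‖ - ‖lam i ^ n‖| := by rw [norm_pow]
          _ ≤ 1 := this
      have hden : κ ^ n ≤ ‖lam i‖ ^ n :=
        pow_le_pow_left₀ hκ0.le (hκ1 i hi) n
      calc |‖lam i ^ n - 1‖ - ‖lam i‖ ^ n| / ‖lam i‖ ^ n
          ≤ 1 / κ ^ n := by
            exact div_le_div₀ (by norm_num) hnum (by positivity) hden
        _ = ε := by rw [hεdef, inv_pow, one_div]
    · rw [Finset.mem_Ico] at hi
      have hrs : r i = ‖lam i ^ n - 1‖ := by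
        simp only [hrdef]
        rw [if_neg (by omega)]
      rw [hrs]
      have := abs_norm_sub_norm_le (lam i ^ n - 1) (-1)
      simp only [norm_neg, norm_one, sub_neg_eq_add, sub_add_cancel] at this
      calc |‖lam i ^ n - 1‖ - 1| ≤ ‖lam i ^ n‖ := this
        _ = ‖lam i‖ ^ n := norm_pow _ _
        _ ≤ (κ⁻¹) ^ n := pow_le_pow_left₀ (norm_nonneg _) (hκ2 i hi.1 hi.2) n
  -- main quantities
  have hb0 : ∀ i ∈ Finset.range s, (0:ℝ) < ‖lam i‖ ^ n := by
    intro i hi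
    rw [Finset.mem_range] at hi
    have := h1 i hi; positivity
  have hprodb : (0:ℝ) < ∏ i ∈ Finset.range s, ‖lam i‖ ^ n :=
    Finset.prod_pos hb0
  -- rewrite Λ
  have hΛ : ‖∏ i ∈ Finset.range s, lam i‖ ^ n
      = ∏ i ∈ Finset.range s, ‖lam i‖ ^ n := by
    rw [norm_prod, ← Finset.prod_pow]
  -- split range d
  have hsplit : (∏ i ∈ Finset.range d, ‖lam i ^ n - 1‖)
      = (∏ i ∈ Finset.range s, ‖lam i ^ n - 1‖) *
        (∏ i ∈ Finset.Ico s (s + 2 * t), ‖lam i ^ n - 1‖) *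
        (∏ i ∈ Finset.Ico (s + 2 * t) d, ‖lam i ^ n - 1‖) := by
    rw [Finset.range_eq_Ico, ← Finset.prod_Ico_consecutive _ (Nat.zero_le (s + 2 * t)) hst,
      ← Finset.prod_Ico_consecutive _ (Nat.zero_le s) (by omega : s ≤ s + 2 * t),
      ← Finset.range_eq_Ico]
  -- product over S of r
  have hprodS : (∏ i ∈ S, r i)
      = ((∏ i ∈ Finset.range s, ‖lam i ^ n - 1‖) /
          (∏ i ∈ Finset.range s, ‖lam i‖ ^ n)) *
        (∏ i ∈ Finset.Ico (s + 2 * t) d, ‖lam i ^ n - 1‖) := by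
    rw [hSdef, Finset.prod_union hdisj, ← Finset.prod_div_distrib]
    congr 1
    · apply Finset.prod_congr rfl
      intro i hi
      rw [Finset.mem_range] at hi
      simp [hrdef, hi]
    · apply Finset.prod_congr rfl
      intro i hi
      rw [Finset.mem_Ico] at hi
      simp only [hrdef]
      rw [if_neg (by omega)]
  set A := ∏ i ∈ Finset.range s, ‖lam i ^ n - 1‖ with hA
  set B := ∏ i ∈ Finset.Ico s (s + 2 * t), ‖lam i ^ n - 1‖ with hB
  set Cc := ∏ i ∈ Finset.Ico (s + 2 * t) d, ‖lam i ^ n - 1‖ with hC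
  set P := ∏ i ∈ Finset.range s, ‖lam i‖ ^ n with hP
  -- the key identity
  have hid : (∏ i ∈ Finset.range d, ‖lam i ^ n - 1‖) *
      (‖∏ i ∈ Finset.range s, lam i‖ ^ n)⁻¹ - B
      = B * ((∏ i ∈ S, r i) - 1) := by
    rw [hsplit, hΛ, hprodS]
    field_simp
  rw [hid, abs_mul]
  -- bound on B
  have hBnn : 0 ≤ B := Finset.prod_nonneg (fun i _ => norm_nonneg _)
  have hBbd : B ≤ 2 ^ (2 * t) := by
    have : B ≤ 2 ^ (Finset.Ico s (s + 2 * t)).card := by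
      rw [hB, ← Finset.prod_const]
      apply Finset.prod_le_prod (fun i _ => norm_nonneg _)
      intro i hi
      rw [Finset.mem_Ico] at hi
      calc ‖lam i ^ n - 1‖ ≤ ‖lam i ^ n‖ + ‖(1:ℂ)‖ := by
            simpa using norm_sub_le (lam i ^ n) 1
        _ = ‖lam i‖ ^ n + 1 := by rw [norm_pow, norm_one]
        _ ≤ 1 + 1 := by
            have := h2 i hi.1 hi.2
            have : ‖lam i‖ ^ n = 1 := by rw [this, one_pow]
            linarith
        _ = 2 := by norm_num
    rwa [Nat.card_Ico, Nat.add_sub_cancel_left] at this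
  have hcard : S.card ≤ d := by
    rw [hSdef, Finset.card_union_of_disjoint hdisj, Finset.card_range, Nat.card_Ico]
    omega
  have hQ : |(∏ i ∈ S, r i) - 1| ≤ d * 2 ^ d * ε := by
    calc |(∏ i ∈ S, r i) - 1| ≤ S.card * 2 ^ S.card * ε :=
          prod_sub_one_bound S r ε hε0 hε1 hr
      _ ≤ d * 2 ^ d * ε := by
          gcongr <;> first | norm_num | exact_mod_cast hcard
  rw [abs_of_nonneg hBnn, hκn]
  calc B * |(∏ i ∈ S, r i) - 1| ≤ 2 ^ (2 * t) * (d * 2 ^ d * ε) := by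
        apply mul_le_mul hBbd hQ (abs_nonneg _) (by positivity)
    _ = 2 ^ (2 * t) * (↑d * 2 ^ d) * ε := by ring
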